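/- arXiv:2403.05071 — 3 statements merged into one kernel-verified Lean document; each statement's English description precedes it below -/
import Mathlib

section
/- Let T ∈ B_{A^{1/2}}(H) with reduced solution T^◇ of the equation A^{1/2}X = T*A^{1/2} with R(T^◇) ⊆ cl(R(A^{1/2})). Then the conjugate of the A-spectrum of T^◇ equals the A-spectrum of T: {conj(λ) : λ ∈ σ_A(T^◇)} = σ_A(T). -/
open Filter Topology ContinuousLinearMap

variable {H : Type*} [NormedAddCommGroup H] [InnerProductSpace ℂ H] [CompleteSpace H]

/-- The `A`-seminorm `‖x‖_A = ⟨Ax,x⟩^{1/2}`. -/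
noncomputable def anorm (A : H →L[ℂ] H) (x : H) : ℝ :=
  Real.sqrt (inner ℂ (A x) x : ℂ).re

/-- `B_{A^{1/2}}(H)`: the `A`-bounded operators. -/
def MemBAhalf (A T : H →L[ℂ] H) : Prop :=
  ∃ d > 0, ∀ ξ : H, anorm A (T ξ) ≤ d * anorm A ξ

/-- `B_A(H)`: operators admitting an `A`-adjoint. -/
def MemBA (A T : H →L[ℂ] H) : Prop :=
  Set.range (fun x => ContinuousLinearMap.adjoint T (A x)) ⊆ Set.range A

/-- A-invertibility in `B_{A^{1/2}}(H)`. -/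
def AInvertibleHalf (A T : H →L[ℂ] H) : Prop :=
  ∃ S : H →L[ℂ] H, S ≠ 0 ∧ MemBAhalf A S ∧ A ∘L T ∘L S = A ∧ A ∘L S ∘L T = A

/-- A-invertibility in `B_A(H)`. -/
def AInvertibleBA (A T : H →L[ℂ] H) : Prop :=
  ∃ S : H →L[ℂ] H, S ≠ 0 ∧ MemBA A S ∧ A ∘L T ∘L S = A ∧ A ∘L S ∘L T = A

/-- The `A`-approximate point spectrum. -/
def sigmaAapp (A T : H →L[ℂ] H) : Set ℂ :=
  {lam | ∃ x : ℕ → H, (∀ n, anorm A (x n) = 1) ∧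
    Tendsto (fun n => anorm A (T (x n) - lam • x n)) atTop (nhds 0)}

/-- The `A`-spectrum. -/
def sigmaA (A T : H →L[ℂ] H) : Set ℂ :=
  {lam | ¬ AInvertibleHalf A (lam • (1 : H →L[ℂ] H) - T)}

/-- The `A`-numerical range. -/
def WA (A T : H →L[ℂ] H) : Set ℂ :=
  {z | ∃ x : H, anorm A x = 1 ∧ z = (inner ℂ (A (T x)) x : ℂ)}

/-- The `A`-operator seminorm, sup over the closure of the range of `A`. -/
noncomputable def AopnormCl (A T : H →L[ℂ] H) : ℝ :=
  sSup {r | ∃ ξ ∈ closure (Set.range A), anorm A ξ ≤ 1 ∧ r = anorm A (T ξ)}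

/-- The `A`-operator seminorm, sup over all vectors of `A`-seminorm at most one. -/
noncomputable def Aopnorm (A T : H →L[ℂ] H) : ℝ :=
  sSup {r | ∃ ξ : H, anorm A ξ ≤ 1 ∧ r = anorm A (T ξ)}

/-- The `A`-numerical radius. -/
noncomputable def wA (A T : H →L[ℂ] H) : ℝ :=
  sSup {r | ∃ x : H, anorm A x = 1 ∧ r = ‖(inner ℂ (A (T x)) x : ℂ)‖}

/-- The `A`-reduced minimum modulus. -/
noncomputable def gammaA (A T : H →L[ℂ] H) : ℝ :=
  sInf {r | ∃ ξ : H, (∀ y : H, anorm A (T y) = 0 → (inner ℂ (A ξ) y : ℂ) = 0) ∧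
    anorm A ξ = 1 ∧ r = anorm A (T ξ)}

/-- closure of the range of `A` as a submodule. -/
noncomputable def rangeClosure (A : H →L[ℂ] H) : Submodule ℂ H :=
  (LinearMap.range (A : H →ₗ[ℂ] H)).topologicalClosure

noncomputable instance (A : H →L[ℂ] H) : CompleteSpace (rangeClosure A) :=
  (Submodule.isClosed_topologicalClosure _).completeSpace_coe

/-- orthogonal projection onto the closure of the range of `A`, as an operator on `H`. -/
noncomputable def Pcl (A : H →L[ℂ] H) : H →L[ℂ] H :=
  (rangeClosure A).subtypeL ∘L Submodule.orthogonalProjectionOnto (rangeClosure A)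



lemma anorm_eq (R : H →L[ℂ] H) (hRsa : IsSelfAdjoint R) (x : H) :
    anorm (R ∘L R) x = ‖R x‖ := by
  have h : (inner ℂ ((R ∘L R) x) x : ℂ) = inner ℂ (R x) (R x) := by
    rw [ContinuousLinearMap.comp_apply]
    nth_rewrite 1 [← hRsa.adjoint_eq]
    rw [ContinuousLinearMap.adjoint_inner_left]
  rw [anorm, h, inner_self_eq_norm_sq_to_K]
  simp [← Complex.ofReal_pow, Real.sqrt_sq (norm_nonneg (R x))]
lemma orth_ker (R : H →L[ℂ] H) (hRsa : IsSelfAdjoint R) {x : H}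
    (hx : x ∈ (rangeClosure R)ᗮ) : R x = 0 := by
  have h1 : (inner ℂ (R (R x)) x : ℂ) = 0 :=
    hx (R (R x)) (Submodule.le_topologicalClosure _ ⟨R x, rfl⟩)
  have h2 : (inner ℂ (R (R x)) x : ℂ) = inner ℂ (R x) (R x) := by
    nth_rewrite 1 [← hRsa.adjoint_eq]
    rw [ContinuousLinearMap.adjoint_inner_left]
  rw [h2] at h1
  exact inner_self_eq_zero.mp h1

lemma keyzero (R G : H →L[ℂ] H) (hRsa : IsSelfAdjoint R)
    (h1 : G ∘L R = 0) (h2 : ∀ x, R x = 0 → G x = 0) : G = 0 := by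
  have hN : rangeClosure R ≤ LinearMap.ker (G : H →ₗ[ℂ] H) := by
    apply Submodule.topologicalClosure_minimal
    · rintro _ ⟨w, rfl⟩
      have := ContinuousLinearMap.ext_iff.mp h1 w
      simpa using this
    · exact ContinuousLinearMap.isClosed_ker G
  ext x
  have hx : x - (Submodule.orthogonalProjectionOnto (rangeClosure R) x : H) ∈ (rangeClosure R)ᗮ :=
    Submodule.sub_starProjection_mem_orthogonal x
  have hGx1 : G ((Submodule.orthogonalProjectionOnto (rangeClosure R) x : H)) = 0 :=
    hN (Submodule.orthogonalProjectionOnto (rangeClosure R) x).2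
  have hGx2 : G (x - (Submodule.orthogonalProjectionOnto (rangeClosure R) x : H)) = 0 :=
    h2 _ (orth_ker R hRsa hx)
  have : G x = G ((Submodule.orthogonalProjectionOnto (rangeClosure R) x : H))
      + G (x - (Submodule.orthogonalProjectionOnto (rangeClosure R) x : H)) := by
    rw [← map_add]; congr 1; abel
  rw [this, hGx1, hGx2]; simp

lemma exists_diamond (R S : H →L[ℂ] H) (hRsa : IsSelfAdjoint R) (d : ℝ)
    (hd : ∀ ξ : H, ‖R (S ξ)‖ ≤ d * ‖R ξ‖) :
    ∃ W : H →L[ℂ] H, R ∘L W = (ContinuousLinearMap.adjoint S) ∘L R ∧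
      ∀ x : H, R x = 0 → W x = 0 := by
  classical
  set Rl : H →ₗ[ℂ] H := (R : H →ₗ[ℂ] H) with hRl
  set rg : Submodule ℂ H := LinearMap.range Rl with hrg
  set N : Submodule ℂ H := rangeClosure R with hN
  have hrgN : rg ≤ N := Submodule.le_topologicalClosure _
  -- kernel inclusion
  have hker : LinearMap.ker Rl ≤ LinearMap.ker ((R ∘L S : H →L[ℂ] H) : H →ₗ[ℂ] H) := by
    intro x hx
    have hx' : R x = 0 := hx
    have := hd x
    rw [hx', norm_zero, mul_zero] at this
    have : R (S x) = 0 := norm_le_zero_iff.mp this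
    simpa [LinearMap.mem_ker] using this
  -- the map f₀ on the range of R
  set f₀ : ↥rg →ₗ[ℂ] H :=
    ((LinearMap.ker Rl).liftQ ((R ∘L S : H →L[ℂ] H) : H →ₗ[ℂ] H) hker).comp
      (Rl.quotKerEquivRange.symm : ↥rg →ₗ[ℂ] H ⧸ LinearMap.ker Rl) with hf₀
  have hf₀apply : ∀ (ξ : H) (h : R ξ ∈ rg), f₀ ⟨R ξ, h⟩ = R (S ξ) := by
    intro ξ h
    have h1 : Rl.quotKerEquivRange.symm ⟨Rl ξ, ⟨ξ, rfl⟩⟩ = (LinearMap.ker Rl).mkQ ξ :=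
      Rl.quotKerEquivRange_symm_apply_image ξ ⟨ξ, rfl⟩
    have h3 : f₀ ⟨R ξ, h⟩ = ((LinearMap.ker Rl).liftQ ((R ∘L S : H →L[ℂ] H) : H →ₗ[ℂ] H) hker)
        (Rl.quotKerEquivRange.symm ⟨Rl ξ, ⟨ξ, rfl⟩⟩) := rfl
    rw [h3, h1]
    rfl
  have hbound : ∀ y : ↥rg, ‖f₀ y‖ ≤ d * ‖y‖ := by
    rintro ⟨y, ξ, rfl⟩
    show ‖f₀ ⟨R ξ, ⟨ξ, rfl⟩⟩‖ ≤ d * ‖(⟨R ξ, ⟨ξ, rfl⟩⟩ : ↥rg)‖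
    rw [hf₀apply ξ ⟨ξ, rfl⟩]
    exact hd ξ
  set f : ↥rg →L[ℂ] H := f₀.mkContinuous d hbound with hf
  have hfapply : ∀ (ξ : H) (h : R ξ ∈ rg), f ⟨R ξ, h⟩ = R (S ξ) := by
    intro ξ h; rw [hf, LinearMap.mkContinuous_apply, hf₀apply]
  -- inclusion of range into closure
  set e₀ : ↥rg →ₗ[ℂ] ↥N := Submodule.inclusion hrgN with he₀
  have he₀norm : ∀ x : ↥rg, ‖e₀ x‖ = ‖x‖ := fun x => rfl
  set e : ↥rg →L[ℂ] ↥N := e₀.mkContinuous 1 (fun x => by rw [he₀norm, one_mul]) with he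
  have heapply : ∀ x : ↥rg, ((e x : ↥N) : H) = (x : H) := fun x => rfl
  have h_e : IsUniformInducing e :=
    (AddMonoidHomClass.isometry_of_norm e (fun x => he₀norm x)).isUniformInducing
  have h_dense : DenseRange e := by
    rw [Metric.denseRange_iff]
    intro y r hr
    have hy : (y : H) ∈ closure (rg : Set H) := by
      rw [← Submodule.topologicalClosure_coe]
      exact y.2
    obtain ⟨b, hb, hdist⟩ := Metric.mem_closure_iff.mp hy r hr
    exact ⟨⟨b, hb⟩, by rwa [Subtype.dist_eq, heapply]⟩
  set C : ↥N →L[ℂ] H := f.extend e with hC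
  have hCe : ∀ x : ↥rg, C (e x) = f x := fun x =>
    ContinuousLinearMap.extend_eq f h_dense h_e x
  -- C maps into N
  have hCN : ∀ w : ↥N, C w ∈ N := by
    have hclosed : IsClosed {w : ↥N | C w ∈ N} := by
      have : IsClosed ((N : Set H)) := Submodule.isClosed_topologicalClosure _
      exact this.preimage C.continuous
    have hsub : Set.range e ⊆ {w : ↥N | C w ∈ N} := by
      rintro _ ⟨x, rfl⟩
      obtain ⟨ξ, hξ⟩ := x.2
      have hx : x = ⟨R ξ, hξ ▸ x.2⟩ := Subtype.ext hξ.symm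
      rw [Set.mem_setOf_eq, hCe, hx, hfapply]
      exact hrgN ⟨S ξ, rfl⟩
    intro w
    exact (hclosed.closure_subset_iff.mpr hsub) (h_dense w)
  set P : H →L[ℂ] ↥N := Submodule.orthogonalProjectionOnto N with hP
  set Cfull : H →L[ℂ] H := C ∘L P with hCfull
  have hCR : Cfull ∘L R = R ∘L S := by
    ext ξ
    have hmem : R ξ ∈ N := hrgN ⟨ξ, rfl⟩
    have hproj : P (R ξ) = ⟨R ξ, hmem⟩ := by
      apply Subtype.ext
      exact Submodule.starProjection_eq_self_iff.mpr hmem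
    have : (⟨R ξ, hmem⟩ : ↥N) = e ⟨R ξ, ⟨ξ, rfl⟩⟩ := rfl
    simp only [ContinuousLinearMap.comp_apply, hCfull]
    rw [hproj, this, hCe]; exact hfapply ξ _
  refine ⟨ContinuousLinearMap.adjoint Cfull, ?_, ?_⟩
  · rw [← hRsa.adjoint_eq, ← ContinuousLinearMap.adjoint_comp,
      ← ContinuousLinearMap.adjoint_comp, hCR]
  · intro x hx
    have hxN : ∀ m ∈ N, (inner ℂ x m : ℂ) = 0 := by
      have hle : N ≤ LinearMap.ker ((innerSL ℂ x : H →L[ℂ] ℂ) : H →ₗ[ℂ] ℂ) := by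
        apply Submodule.topologicalClosure_minimal
        · rintro _ ⟨w, rfl⟩
          rw [LinearMap.mem_ker]
          show (inner ℂ x (R w) : ℂ) = 0
          rw [← hRsa.adjoint_eq, ContinuousLinearMap.adjoint_inner_right, hx, inner_zero_left]
        · exact ContinuousLinearMap.isClosed_ker (innerSL ℂ x)
      intro m hm
      exact hle hm
    set W := ContinuousLinearMap.adjoint Cfull with hW
    have h3 : (inner ℂ (W x) (W x) : ℂ) = 0 := by
      calc (inner ℂ (W x) (W x) : ℂ) = inner ℂ x (Cfull (W x)) :=
            ContinuousLinearMap.adjoint_inner_left Cfull (W x) x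
        _ = 0 := hxN _ (hCN (P (W x)))
    exact inner_self_eq_zero.mp h3
lemma transfer (A R U V : H →L[ℂ] H) (hA0 : A ≠ 0) (hRsa : IsSelfAdjoint R)
    (hsq : R ∘L R = A) (hUV : R ∘L V = (ContinuousLinearMap.adjoint U) ∘L R)
    (h : AInvertibleHalf A U) : AInvertibleHalf A V := by
  obtain ⟨S, hS0, ⟨d, hd0, hdS⟩, hUS, hSU⟩ := h
  have hAsa : IsSelfAdjoint A := by
    rw [← hsq]
    show star (R ∘L R) = R ∘L R
    rw [show (R ∘L R) = R * R from rfl, star_mul, hRsa.star_eq]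
  have hdd : ∀ ξ : H, ‖R (S ξ)‖ ≤ d * ‖R ξ‖ := by
    intro ξ
    have := hdS ξ
    rwa [← hsq, anorm_eq R hRsa, anorm_eq R hRsa] at this
  obtain ⟨W, hRW, hWker⟩ := exists_diamond R S hRsa d hdd
  have hRWpt : ∀ x : H, R (W x) = ContinuousLinearMap.adjoint S (R x) := fun x =>
    ContinuousLinearMap.ext_iff.mp hRW x
  -- adjoint identities
  have hadj1 : (ContinuousLinearMap.adjoint U ∘L ContinuousLinearMap.adjoint S) ∘L A = A := by
    have := congrArg ContinuousLinearMap.adjoint hSU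
    rwa [ContinuousLinearMap.adjoint_comp, ContinuousLinearMap.adjoint_comp,
      hAsa.adjoint_eq] at this
  have hadj2 : (ContinuousLinearMap.adjoint S ∘L ContinuousLinearMap.adjoint U) ∘L A = A := by
    have := congrArg ContinuousLinearMap.adjoint hUS
    rwa [ContinuousLinearMap.adjoint_comp, ContinuousLinearMap.adjoint_comp,
      hAsa.adjoint_eq] at this
  have hRVW : R ∘L (V ∘L W) =
      ContinuousLinearMap.adjoint U ∘L (ContinuousLinearMap.adjoint S ∘L R) := by
    rw [← ContinuousLinearMap.comp_assoc, hUV, ContinuousLinearMap.comp_assoc, hRW]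
  have hRWV : R ∘L (W ∘L V) =
      ContinuousLinearMap.adjoint S ∘L (ContinuousLinearMap.adjoint U ∘L R) := by
    rw [← ContinuousLinearMap.comp_assoc, hRW, ContinuousLinearMap.comp_assoc, hUV]
  -- first identity
  have hG1 : (R ∘L (V ∘L W) - R) ∘L R = 0 := by
    rw [ContinuousLinearMap.sub_comp, hRVW, ContinuousLinearMap.comp_assoc,
      ContinuousLinearMap.comp_assoc, hsq, ← ContinuousLinearMap.comp_assoc, hadj1, sub_self]
  have hG1ker : ∀ x : H, R x = 0 → (R ∘L (V ∘L W) - R) x = 0 := by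
    intro x hx
    simp [hWker x hx, hx]
  have hG1zero : R ∘L (V ∘L W) - R = 0 := keyzero R _ hRsa hG1 hG1ker
  have hEq1 : A ∘L (V ∘L W) = A := by
    have h1 : R ∘L (V ∘L W) = R := by rwa [sub_eq_zero] at hG1zero
    rw [← hsq, ContinuousLinearMap.comp_assoc, h1]
  -- second identity
  have hG2 : (R ∘L (W ∘L V) - R) ∘L R = 0 := by
    rw [ContinuousLinearMap.sub_comp, hRWV, ContinuousLinearMap.comp_assoc,
      ContinuousLinearMap.comp_assoc, hsq, ← ContinuousLinearMap.comp_assoc, hadj2, sub_self]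
  have hG2ker : ∀ x : H, R x = 0 → (R ∘L (W ∘L V) - R) x = 0 := by
    intro x hx
    have := ContinuousLinearMap.ext_iff.mp hRWV x
    simp only [ContinuousLinearMap.sub_apply, ContinuousLinearMap.comp_apply] at this ⊢
    rw [this, hx]
    simp
  have hG2zero : R ∘L (W ∘L V) - R = 0 := keyzero R _ hRsa hG2 hG2ker
  have hEq2 : A ∘L (W ∘L V) = A := by
    have h1 : R ∘L (W ∘L V) = R := by rwa [sub_eq_zero] at hG2zero
    rw [← hsq, ContinuousLinearMap.comp_assoc, h1]
  -- W ≠ 0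
  have hW0 : W ≠ 0 := by
    intro h0
    apply hA0
    have hRS : R ∘L S = 0 := by
      have := congrArg ContinuousLinearMap.adjoint hRW
      rw [ContinuousLinearMap.adjoint_comp, ContinuousLinearMap.adjoint_comp,
        ContinuousLinearMap.adjoint_adjoint, hRsa.adjoint_eq] at this
      rw [h0] at this
      simpa using this.symm
    have hAS : A ∘L S = 0 := by
      rw [← hsq, ContinuousLinearMap.comp_assoc, hRS, ContinuousLinearMap.comp_zero]
    calc A = A ∘L (S ∘L U) := hSU.symm
      _ = (A ∘L S) ∘L U := (ContinuousLinearMap.comp_assoc _ _ _).symm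
      _ = 0 := by rw [hAS, ContinuousLinearMap.zero_comp]
  -- MemBAhalf
  have hWmem : MemBAhalf A W := by
    refine ⟨‖ContinuousLinearMap.adjoint S‖ + 1, by positivity, ?_⟩
    intro ξ
    rw [← hsq, anorm_eq R hRsa, anorm_eq R hRsa, hRWpt ξ]
    calc ‖ContinuousLinearMap.adjoint S (R ξ)‖
        ≤ ‖ContinuousLinearMap.adjoint S‖ * ‖R ξ‖ := ContinuousLinearMap.le_opNorm _ _
      _ ≤ (‖ContinuousLinearMap.adjoint S‖ + 1) * ‖R ξ‖ := by
          have := norm_nonneg (R ξ)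
          nlinarith [norm_nonneg (ContinuousLinearMap.adjoint S)]
  exact ⟨W, hW0, hWmem, hEq1, hEq2⟩

lemma adjoint_smul_one_sub (μ : ℂ) (X : H →L[ℂ] H) :
    ContinuousLinearMap.adjoint (μ • (1 : H →L[ℂ] H) - X)
      = (starRingEnd ℂ μ) • (1 : H →L[ℂ] H) - ContinuousLinearMap.adjoint X := by
  rw [← ContinuousLinearMap.star_eq_adjoint, ← ContinuousLinearMap.star_eq_adjoint,
    star_sub, star_smul, star_one, starRingEnd_apply]

/-- `(σ_A(T^◇))^* = σ_A(T)`, where `T^◇` is the reduced solution of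
`A^{1/2} X = T^* A^{1/2}`. -/
theorem stmt10 (A T sqrtA Tdia : H →L[ℂ] H) (hA : A.IsPositive) (hA0 : A ≠ 0)
    (hsqpos : sqrtA.IsPositive) (hsq : sqrtA ∘L sqrtA = A)
    (hT : MemBAhalf A T)
    (hdia : sqrtA ∘L Tdia = (ContinuousLinearMap.adjoint T) ∘L sqrtA)
    (hrange : Set.range Tdia ⊆ closure (Set.range sqrtA)) :
    (fun z : ℂ => starRingEnd ℂ z) '' sigmaA A Tdia = sigmaA A T := by
  have hRsa : IsSelfAdjoint sqrtA := hsqpos.isSelfAdjoint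
  have hdia2 : ContinuousLinearMap.adjoint Tdia ∘L sqrtA = sqrtA ∘L T := by
    have := congrArg ContinuousLinearMap.adjoint hdia
    rwa [ContinuousLinearMap.adjoint_comp, ContinuousLinearMap.adjoint_comp,
      ContinuousLinearMap.adjoint_adjoint, hRsa.adjoint_eq] at this
  have hdia_pt : ∀ x : H, sqrtA (Tdia x) = ContinuousLinearMap.adjoint T (sqrtA x) :=
    fun x => ContinuousLinearMap.ext_iff.mp hdia x
  have hdia2_pt : ∀ x : H, ContinuousLinearMap.adjoint Tdia (sqrtA x) = sqrtA (T x) :=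
    fun x => ContinuousLinearMap.ext_iff.mp hdia2 x
  have hUV1 : ∀ μ : ℂ, sqrtA ∘L ((starRingEnd ℂ μ) • (1 : H →L[ℂ] H) - Tdia)
      = ContinuousLinearMap.adjoint (μ • (1 : H →L[ℂ] H) - T) ∘L sqrtA := by
    intro μ
    rw [adjoint_smul_one_sub]
    ext x
    simp [hdia_pt x]
  have hUV2 : ∀ μ : ℂ, sqrtA ∘L (μ • (1 : H →L[ℂ] H) - T)
      = ContinuousLinearMap.adjoint ((starRingEnd ℂ μ) • (1 : H →L[ℂ] H) - Tdia) ∘L sqrtA := by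
    intro μ
    rw [adjoint_smul_one_sub]
    ext x
    simp [hdia2_pt x]
  have key : ∀ μ : ℂ, AInvertibleHalf A (μ • (1 : H →L[ℂ] H) - T) ↔
      AInvertibleHalf A ((starRingEnd ℂ μ) • (1 : H →L[ℂ] H) - Tdia) :=
    fun μ => ⟨transfer A sqrtA _ _ hA0 hRsa hsq (hUV1 μ),
      transfer A sqrtA _ _ hA0 hRsa hsq (hUV2 μ)⟩
  ext z
  simp only [Set.mem_image, sigmaA, Set.mem_setOf_eq]
  constructor
  · rintro ⟨w, hw, rfl⟩
    intro hinv
    apply hw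
    have := (key (starRingEnd ℂ w)).mp hinv
    rwa [Complex.conj_conj] at this
  · intro hz
    refine ⟨starRingEnd ℂ z, ?_, Complex.conj_conj z⟩
    intro hinv
    exact hz ((key z).mpr hinv)
end

section
/- Let T, T' ∈ B_A(H) with T^♯(T')^♯ = (T')^♯T^♯. Then T and T' are both A-invertible in B_A(H) if and only if TT' is A-invertible in B_A(H). -/
open Filter Topology ContinuousLinearMap

variable {H : Type*} [NormedAddCommGroup H] [InnerProductSpace ℂ H] [CompleteSpace H]

lemma sa_inner {A : H →L[ℂ] H} (hA : A.IsPositive) (y z : H) :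
    (inner ℂ (A y) z : ℂ) = inner ℂ y (A z) := by
  rw [← hA.isSelfAdjoint.adjoint_eq, ContinuousLinearMap.adjoint_inner_left,
    hA.isSelfAdjoint.adjoint_eq]

lemma memBA_ker {A S : H →L[ℂ] H} (hA : A.IsPositive) (hS : MemBA A S)
    {x : H} (hx : A x = 0) : A (S x) = 0 := by
  rw [← @inner_self_eq_zero ℂ]
  obtain ⟨v, hv⟩ := hS ⟨A (S x), rfl⟩
  calc (inner ℂ (A (S x)) (A (S x)) : ℂ)
      = inner ℂ (S x) (A (A (S x))) := sa_inner hA _ _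
    _ = inner ℂ x (ContinuousLinearMap.adjoint S (A (A (S x)))) := by
        rw [ContinuousLinearMap.adjoint_inner_right]
    _ = inner ℂ x (A v) := by rw [hv]
    _ = inner ℂ (A x) v := (sa_inner hA _ _).symm
    _ = 0 := by rw [hx, inner_zero_left]

lemma memBA_congr {A S : H →L[ℂ] H} (hA : A.IsPositive) (hS : MemBA A S)
    {x y : H} (h : A x = A y) : A (S x) = A (S y) := by
  have h0 : A (x - y) = 0 := by rw [map_sub, h, sub_self]
  have := memBA_ker hA hS h0
  rw [map_sub, map_sub, sub_eq_zero] at this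
  exact this

lemma memBA_comp {A S1 S2 : H →L[ℂ] H} (h1 : MemBA A S1) (h2 : MemBA A S2) :
    MemBA A (S1 ∘L S2) := by
  rintro y ⟨x, rfl⟩
  obtain ⟨v, hv⟩ := h1 ⟨x, rfl⟩
  obtain ⟨w, hw⟩ := h2 ⟨v, rfl⟩
  refine ⟨w, ?_⟩
  simp only [ContinuousLinearMap.adjoint_comp, ContinuousLinearMap.comp_apply] at *
  rw [hw, hv]

lemma acomm_ptwise {A T T' Ts Ts' : H →L[ℂ] H} (hA : A.IsPositive)
    (hTs : (ContinuousLinearMap.adjoint T) ∘L A = A ∘L Ts)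
    (hTs' : (ContinuousLinearMap.adjoint T') ∘L A = A ∘L Ts')
    (hcomm : Ts ∘L Ts' = Ts' ∘L Ts) (x : H) :
    A (T (T' x)) = A (T' (T x)) := by
  have hAT : A ∘L T = ContinuousLinearMap.adjoint Ts ∘L A := by
    have h := congrArg ContinuousLinearMap.adjoint hTs
    rwa [ContinuousLinearMap.adjoint_comp, ContinuousLinearMap.adjoint_comp,
      ContinuousLinearMap.adjoint_adjoint, hA.isSelfAdjoint.adjoint_eq] at h
  have hAT' : A ∘L T' = ContinuousLinearMap.adjoint Ts' ∘L A := by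
    have h := congrArg ContinuousLinearMap.adjoint hTs'
    rwa [ContinuousLinearMap.adjoint_comp, ContinuousLinearMap.adjoint_comp,
      ContinuousLinearMap.adjoint_adjoint, hA.isSelfAdjoint.adjoint_eq] at h
  have e1 : ∀ y, A (T y) = ContinuousLinearMap.adjoint Ts (A y) :=
    fun y => ContinuousLinearMap.ext_iff.mp hAT y
  have e2 : ∀ y, A (T' y) = ContinuousLinearMap.adjoint Ts' (A y) :=
    fun y => ContinuousLinearMap.ext_iff.mp hAT' y
  calc A (T (T' x)) = ContinuousLinearMap.adjoint Ts (A (T' x)) := e1 _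
    _ = ContinuousLinearMap.adjoint Ts (ContinuousLinearMap.adjoint Ts' (A x)) := by rw [e2]
    _ = ContinuousLinearMap.adjoint (Ts' ∘L Ts) (A x) := by
        rw [ContinuousLinearMap.adjoint_comp]; rfl
    _ = ContinuousLinearMap.adjoint (Ts ∘L Ts') (A x) := by rw [hcomm]
    _ = ContinuousLinearMap.adjoint Ts' (ContinuousLinearMap.adjoint Ts (A x)) := by
        rw [ContinuousLinearMap.adjoint_comp]; rfl
    _ = ContinuousLinearMap.adjoint Ts' (A (T x)) := by rw [e1]
    _ = A (T' (T x)) := (e2 _).symm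

/-- if `T, T' ∈ B_A(H)` with commuting `A`-adjoints `T^♯ (T')^♯ = (T')^♯ T^♯`,
then `T` and `T'` are both `A`-invertible in `B_A(H)` iff `T T'` is. -/
theorem stmt13 (A T T' Ts Ts' : H →L[ℂ] H) (hA : A.IsPositive) (hA0 : A ≠ 0)
    (hT : MemBA A T) (hT' : MemBA A T')
    (hTs : (ContinuousLinearMap.adjoint T) ∘L A = A ∘L Ts)
    (hTsr : Set.range Ts ⊆ closure (Set.range A))
    (hTs' : (ContinuousLinearMap.adjoint T') ∘L A = A ∘L Ts')
    (hTsr' : Set.range Ts' ⊆ closure (Set.range A))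
    (hcomm : Ts ∘L Ts' = Ts' ∘L Ts) :
    (AInvertibleBA A T ∧ AInvertibleBA A T') ↔ AInvertibleBA A (T ∘L T') := by
  constructor
  · rintro ⟨⟨S, hS0, hSm, hTS, hST⟩, ⟨S', hS'0, hS'm, hT'S', hS'T'⟩⟩
    have eTS : ∀ x, A (T (S x)) = A x := fun x => ContinuousLinearMap.ext_iff.mp hTS x
    have eST : ∀ x, A (S (T x)) = A x := fun x => ContinuousLinearMap.ext_iff.mp hST x
    have eT'S' : ∀ x, A (T' (S' x)) = A x := fun x => ContinuousLinearMap.ext_iff.mp hT'S' x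
    have eS'T' : ∀ x, A (S' (T' x)) = A x := fun x => ContinuousLinearMap.ext_iff.mp hS'T' x
    have eq1 : A ∘L (T ∘L T') ∘L (S' ∘L S) = A := by
      ext x
      show A (T (T' (S' (S x)))) = A x
      have h1 : A (T' (S' (S x))) = A (S x) := eT'S' _
      have h2 : A (T (T' (S' (S x)))) = A (T (S x)) := memBA_congr hA hT h1
      rw [h2, eTS]
    have eq2 : A ∘L (S' ∘L S) ∘L (T ∘L T') = A := by
      ext x
      show A (S' (S (T (T' x)))) = A x
      have h1 : A (S (T (T' x))) = A (T' x) := eST _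
      have h2 : A (S' (S (T (T' x)))) = A (S' (T' x)) := memBA_congr hA hS'm h1
      rw [h2, eS'T']
    refine ⟨S' ∘L S, ?_, memBA_comp hS'm hSm, eq1, eq2⟩
    intro h
    apply hA0
    rw [h] at eq1
    simpa using eq1.symm
  · rintro ⟨S, hS0, hSm, h1, h2⟩
    have e1 : ∀ x, A (T (T' (S x))) = A x := fun x => ContinuousLinearMap.ext_iff.mp h1 x
    have e2 : ∀ x, A (S (T (T' x))) = A x := fun x => ContinuousLinearMap.ext_iff.mp h2 x
    have comm : ∀ x, A (T (T' x)) = A (T' (T x)) := acomm_ptwise hA hTs hTs' hcomm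
    -- key : A (S (T' (T x))) = A x
    have key : ∀ x, A (S (T' (T x))) = A x := by
      intro x
      have := memBA_congr hA hSm (comm x).symm
      rw [this, e2]
    -- swap : A (T' (S x)) = A (S (T' x))
    have swap : ∀ x, A (T' (S x)) = A (S (T' x)) := by
      intro x
      have hz : A (T (T' (S x))) = A x := e1 x
      have hST' : MemBA A (S ∘L T') := memBA_comp hSm hT'
      have h3 : A ((S ∘L T') (T (T' (S x)))) = A ((S ∘L T') x) := memBA_congr hA hST' hz
      simp only [ContinuousLinearMap.comp_apply] at h3
      rw [key (T' (S x))] at h3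
      exact h3
    -- main : A (T' (S (T x))) = A x
    have main : ∀ x, A (T' (S (T x))) = A x := by
      intro x
      rw [swap (T x), key x]
    constructor
    · refine ⟨T' ∘L S, ?_, memBA_comp hT' hSm, ?_, ?_⟩
      · intro h
        apply hA0
        have : A ∘L T ∘L (T' ∘L S) = A := by
          ext x; show A (T (T' (S x))) = A x; exact e1 x
        rw [h] at this
        simpa using this.symm
      · ext x; show A (T (T' (S x))) = A x; exact e1 x
      · ext x; show A (T' (S (T x))) = A x; exact main x
    · refine ⟨S ∘L T, ?_, memBA_comp hSm hT, ?_, ?_⟩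
      · intro h
        apply hA0
        have : A ∘L (S ∘L T) ∘L T' = A := by
          ext x; show A (S (T (T' x))) = A x; exact e2 x
        rw [h] at this
        simpa using this.symm
      · ext x; show A (T' (S (T x))) = A x; exact main x
      · ext x; show A (S (T (T' x))) = A x; exact e2 x
end

section
/- Let T ∈ B_A(H). Then T is A-selfadjoint (T*A = AT) if and only if the A-numerical range W_A(T) is contained in ℝ. -/
open Filter Topology ContinuousLinearMap

variable {H : Type*} [NormedAddCommGroup H] [InnerProductSpace ℂ H] [CompleteSpace H]

/-- For a positive operator, `⟪Ax,x⟫ = 0` implies `Ax = 0`. -/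
lemma pos_apply_eq_zero (A : H →L[ℂ] H) (hA : A.IsPositive) (x : H)
    (hx : (inner ℂ (A x) x : ℂ).re = 0) : A x = 0 := by
  have hre : ∀ y : H, (inner ℂ (A x) y : ℂ).re = 0 := by
    intro y
    set c : ℝ := (inner ℂ (A x) y : ℂ).re with hc
    set d : ℝ := (inner ℂ (A y) y : ℂ).re with hd
    have hd0 : 0 ≤ d := hA.re_inner_nonneg_left y
    have key : ∀ t : ℝ, 0 ≤ 2 * t * c + t ^ 2 * d := by
      intro t
      have h0 := hA.re_inner_nonneg_left (x + (t : ℂ) • y)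
      have hsym : ((inner ℂ y (A x) : ℂ)).re = ((inner ℂ (A x) y : ℂ)).re := by
        rw [← inner_conj_symm (A x) y, Complex.conj_re]
      have key2 : ((inner ℂ (A (x + (t:ℂ) • y)) (x + (t:ℂ) • y) : ℂ)).re
          = 2 * t * c + t ^ 2 * d := by
        simp only [map_add, map_smul, inner_add_left, inner_add_right,
          inner_smul_left, inner_smul_right]
        have h2 : (inner ℂ (A y) x : ℂ) = inner ℂ y (A x) := hA.isSelfAdjoint.isSymmetric y x
        rw [h2]
        simp only [Complex.add_re, Complex.mul_re, Complex.conj_re, Complex.conj_im,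
          Complex.ofReal_re, Complex.ofReal_im, hx]
        rw [hsym]
        ring
      rw [show (RCLike.re (inner ℂ (A (x + (t:ℂ) • y)) (x + (t:ℂ) • y) : ℂ)) = ((inner ℂ (A (x + (t:ℂ) • y)) (x + (t:ℂ) • y) : ℂ)).re from rfl, key2] at h0
      exact h0
    by_contra hcne
    have hc2 : 0 < c ^ 2 := by positivity
    set ε : ℝ := 1 / (d + 1) with hε
    have hεpos : 0 < ε := by positivity
    have h1 : ε * d < 2 := by
      have : ε * d ≤ 1 := by
        rw [hε, div_mul_eq_mul_div, one_mul, div_le_one (by linarith)]; linarith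
      linarith
    have := key (-(ε * c))
    nlinarith [sq_nonneg c, mul_pos hεpos hc2]
  have hall : ∀ y : H, (inner ℂ (A x) y : ℂ) = 0 := by
    intro y
    have h1 := hre y
    have h2 := hre ((Complex.I) • y)
    rw [inner_smul_right] at h2
    simp only [Complex.mul_re, Complex.I_re, Complex.I_im] at h2
    apply Complex.ext
    · simpa using h1
    · simpa using h2
  have := hall (A x)
  rwa [inner_self_eq_zero] at this

/-- `T ∈ B_A(H)` is `A`-selfadjoint iff `W_A(T)` is real. -/
theorem stmt14 (A T : H →L[ℂ] H) (hA : A.IsPositive) (hA0 : A ≠ 0)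
    (hT : MemBA A T) :
    (ContinuousLinearMap.adjoint T) ∘L A = A ∘L T ↔
      WA A T ⊆ Set.range ((↑) : ℝ → ℂ) := by
  have hAsa : IsSelfAdjoint A := hA.isSelfAdjoint
  have key : ((ContinuousLinearMap.adjoint T) ∘L A = A ∘L T) ↔ IsSelfAdjoint (A ∘L T) := by
    rw [isSelfAdjoint_iff', adjoint_comp, hAsa.adjoint_eq]
  have key2 : IsSelfAdjoint (A ∘L T) ↔
      ∀ v : H, starRingEnd ℂ (inner ℂ (A (T v)) v : ℂ) = (inner ℂ (A (T v)) v : ℂ) := by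
    rw [isSelfAdjoint_iff_isSymmetric, LinearMap.isSymmetric_iff_inner_map_self_real]
    rfl
  rw [key, key2]
  constructor
  · rintro h z ⟨x, hx1, rfl⟩
    exact ⟨(inner ℂ (A (T x)) x : ℂ).re, Complex.conj_eq_iff_re.mp (h x)⟩
  · intro h v
    by_cases hv : (inner ℂ (A v) v : ℂ).re = 0
    · have hAv : A v = 0 := pos_apply_eq_zero A hA v hv
      have hz : (inner ℂ (A (T v)) v : ℂ) = 0 := by
        have hsym : (inner ℂ (A (T v)) v : ℂ) = inner ℂ (T v) (A v) :=
          hA.isSelfAdjoint.isSymmetric (T v) v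
        rw [hsym, hAv, inner_zero_right]
      rw [hz]; simp
    · have hrepos : 0 < (inner ℂ (A v) v : ℂ).re :=
        lt_of_le_of_ne (hA.re_inner_nonneg_left v) (Ne.symm hv)
      set c : ℝ := Real.sqrt (inner ℂ (A v) v : ℂ).re with hcdef
      have hc : 0 < c := Real.sqrt_pos.mpr hrepos
      have hc2 : c ^ 2 = (inner ℂ (A v) v : ℂ).re := Real.sq_sqrt hrepos.le
      set u : H := ((c⁻¹ : ℝ) : ℂ) • v with hudef
      have hinneru : (inner ℂ (A u) u : ℂ)
          = ((c⁻¹ : ℝ) : ℂ) * ((c⁻¹ : ℝ) : ℂ) * inner ℂ (A v) v := by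
        simp only [hudef, map_smul, inner_smul_left, inner_smul_right, Complex.conj_ofReal]
        ring
      have hanormu : anorm A u = 1 := by
        have hre : (inner ℂ (A u) u : ℂ).re = 1 := by
          rw [hinneru]
          simp only [Complex.mul_re, Complex.ofReal_re, Complex.ofReal_im, Complex.mul_im]
          field_simp
          nlinarith [hc2]
        rw [anorm, hre, Real.sqrt_one]
      obtain ⟨r, hr⟩ := h ⟨u, hanormu, rfl⟩
      have hTu : (inner ℂ (A (T u)) u : ℂ)
          = ((c⁻¹ : ℝ) : ℂ) * ((c⁻¹ : ℝ) : ℂ) * inner ℂ (A (T v)) v := by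
        simp only [hudef, map_smul, inner_smul_left, inner_smul_right, Complex.conj_ofReal]
        ring
      have hcne : ((c : ℝ) : ℂ) ≠ 0 := by exact_mod_cast hc.ne'
      have hvz : (inner ℂ (A (T v)) v : ℂ) = ((c : ℝ) : ℂ) * ((c : ℝ) : ℂ) * (r : ℂ) := by
        rw [hr, hTu]
        push_cast
        field_simp
      rw [hvz]
      simp [map_mul, Complex.conj_ofReal]
end
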